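/- Fix p with 1 < p ≤ 2. Then for every t ∈ (0, 1] one has (1/p) t^p − 1/p − (t − 1) ≤ ((p − 1)/2) (ln t)². -/

import Mathlib

open Real

lemma stmt_13_key (p : ℝ) (hp1 : 1 < p) : ∀ u : ℝ, 0 ≤ u →
    (1 / p) * Real.exp (-(p * u)) - 1 / p - (Real.exp (-u) - 1) ≤ ((p - 1) / 2) * u ^ 2 := by
  have hp0 : (0:ℝ) < p := by linarith
  set F : ℝ → ℝ := fun u => ((p - 1) / 2) * u ^ 2 + 1 / p + Real.exp (-u) - 1
      - (1 / p) * Real.exp (-(p * u)) with hFdef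
  have hF : ∀ u : ℝ, HasDerivAt F ((p - 1) * u + Real.exp (-(p * u)) - Real.exp (-u)) u := by
    intro u
    have h1 : HasDerivAt (fun u : ℝ => ((p - 1) / 2) * u ^ 2) ((p - 1) / 2 * (2 * u ^ 1)) u :=
      (hasDerivAt_pow 2 u).const_mul _
    have h2 : HasDerivAt (fun u : ℝ => Real.exp (-u)) (Real.exp (-u) * (-1)) u :=
      (Real.hasDerivAt_exp (-u)).comp u ((hasDerivAt_id u).neg)
    have h3 : HasDerivAt (fun u : ℝ => (1 / p) * Real.exp (-(p * u)))
        ((1 / p) * (Real.exp (-(p * u)) * (-p))) u := by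
      have hin : HasDerivAt (fun u : ℝ => -(p * u)) (-p) u := by
        exact (((hasDerivAt_id u).const_mul p).neg).congr_deriv (by ring)
      exact (((Real.hasDerivAt_exp (-(p * u))).comp u hin).const_mul _)
    have := ((h1.add_const (1 / p)).add h2).add_const (-1) |>.sub h3
    refine this.congr_deriv ?_
    have hp' : p ≠ 0 := hp0.ne'
    rw [show (1 / p) * (Real.exp (-(p * u)) * (-p)) = -Real.exp (-(p * u)) by field_simp]
    ring
  have hdiff : Differentiable ℝ F := fun u => (hF u).differentiableAt
  have hmono : MonotoneOn F (Set.Ici 0) := by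
    apply monotoneOn_of_deriv_nonneg (convex_Ici 0) hdiff.continuous.continuousOn
    · intro x hx; exact (hdiff x).differentiableWithinAt
    · intro x hx
      rw [(hF x).deriv]
      rw [interior_Ici] at hx
      have hx0 : (0:ℝ) < x := hx
      have e1 : Real.exp (-(p * x)) = Real.exp (-x) * Real.exp (-((p - 1) * x)) := by
        rw [← Real.exp_add]; ring_nf
      have e2 : 1 - (p - 1) * x ≤ Real.exp (-((p - 1) * x)) := by
        have := Real.add_one_le_exp (-((p - 1) * x)); linarith
      have e3 : Real.exp (-x) ≤ 1 := Real.exp_le_one_iff.mpr (by linarith)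
      have e4 : 0 < Real.exp (-x) := Real.exp_pos _
      nlinarith [mul_nonneg (sub_nonneg.mpr e3) (mul_nonneg (by linarith : (0:ℝ) ≤ p - 1) hx0.le)]
  intro u hu
  have h0 : F 0 = 0 := by simp [hFdef]
  have := hmono (Set.self_mem_Ici) (Set.mem_Ici.mpr hu) hu
  rw [h0] at this
  simp only [hFdef] at this
  linarith

/-- for `t ∈ (0,1]`, `(1/p) t^p - 1/p - (t-1) ≤ ((p-1)/2) (ln t)²`. -/
theorem stmt_13 (p : ℝ) (hp1 : 1 < p) (hp2 : p ≤ 2) (t : ℝ) (ht : t ∈ Set.Ioc (0 : ℝ) 1) :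
    (1 / p) * t ^ p - 1 / p - (t - 1) ≤ ((p - 1) / 2) * (Real.log t) ^ 2 := by
  obtain ⟨ht0, ht1⟩ := ht
  have hlog : Real.log t ≤ 0 := Real.log_nonpos ht0.le ht1
  have hkey := stmt_13_key p hp1 (-Real.log t) (by linarith)
  have h1 : Real.exp (-(-Real.log t)) = t := by
    rw [neg_neg, Real.exp_log ht0]
  have h2 : t ^ p = Real.exp (-(p * -Real.log t)) := by
    rw [Real.rpow_def_of_pos ht0]; ring_nf
  rw [h1] at hkey
  rw [h2]
  calc (1 / p) * Real.exp (-(p * -Real.log t)) - 1 / p - (t - 1)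
      ≤ ((p - 1) / 2) * (-Real.log t) ^ 2 := hkey
    _ = ((p - 1) / 2) * Real.log t ^ 2 := by ring
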